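/- Let R be a commutative ring and let M₁, M₂, M₃, N₂, N₃, P₂, P₃, Q₂, Q₃ be R-modules, with R-linear maps φ : M₁ → M₂, ψ : M₂ → M₃, δ₁ : M₂ → N₂ × P₂, δ₂ : N₂ × P₂ → Q₂, ψ_N : N₂ → N₃, ψ_P : P₂ → P₃, ψ_Q : Q₂ → Q₃, ι : M₃ → N₃ × P₃, and ρ : N₃ × P₃ → Q₃, satisfying: (a) ι ∘ ψ = (ψ_N × ψ_P) ∘ δ₁ and ψ_Q ∘ δ₂ = ρ ∘ (ψ_N × ψ_P) (the squares commute); (b) ker ψ = im φ; (c) ker δ₂ ⊆ im δ₁; (d) ι and ψ_Q are injective. Then for every ξ ∈ N₂ one has ψ_N(ξ) = 0 if and only if there exists ξ' ∈ M₁ with δ₁(φ(ξ')) = (ξ, 0). -/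

import Mathlib

/-- The abstract diagram chase underlying Theorems 4.2 and 4.4(2):
given a commutative ladder of `R`-module maps with the stated exactness and
injectivity properties, an element `ξ ∈ N₂` satisfies `ψ_N ξ = 0` if and only if
`(ξ, 0)` comes from `M₁` via `δ₁ ∘ φ`. -/
theorem diagram_chase_kernel_description
    {R : Type*} [CommRing R]
    {M₁ M₂ M₃ N₂ N₃ P₂ P₃ Q₂ Q₃ : Type*}
    [AddCommGroup M₁] [AddCommGroup M₂] [AddCommGroup M₃]
    [AddCommGroup N₂] [AddCommGroup N₃] [AddCommGroup P₂] [AddCommGroup P₃]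
    [AddCommGroup Q₂] [AddCommGroup Q₃]
    [Module R M₁] [Module R M₂] [Module R M₃]
    [Module R N₂] [Module R N₃] [Module R P₂] [Module R P₃]
    [Module R Q₂] [Module R Q₃]
    (φ : M₁ →ₗ[R] M₂) (ψ : M₂ →ₗ[R] M₃)
    (δ₁ : M₂ →ₗ[R] N₂ × P₂) (δ₂ : N₂ × P₂ →ₗ[R] Q₂)
    (ψN : N₂ →ₗ[R] N₃) (ψP : P₂ →ₗ[R] P₃) (ψQ : Q₂ →ₗ[R] Q₃)
    (ι : M₃ →ₗ[R] N₃ × P₃) (ρ : N₃ × P₃ →ₗ[R] Q₃)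
    (hsq₁ : ι.comp ψ = (ψN.prodMap ψP).comp δ₁)
    (hsq₂ : ψQ.comp δ₂ = ρ.comp (ψN.prodMap ψP))
    (hexact : LinearMap.ker ψ = LinearMap.range φ)
    (hMV : LinearMap.ker δ₂ ≤ LinearMap.range δ₁)
    (hι : Function.Injective ι) (hψQ : Function.Injective ψQ) :
    ∀ ξ : N₂, ψN ξ = 0 ↔ ∃ ξ' : M₁, δ₁ (φ ξ') = (ξ, 0) := by
  intro ξ
  constructor
  · intro hξ
    -- (ξ, 0) is killed by δ₂ since ψQ (δ₂ (ξ,0)) = ρ (0,0) = 0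
    have h2 : δ₂ (ξ, 0) = 0 := by
      apply hψQ
      have := congrFun (congrArg DFunLike.coe hsq₂) (ξ, 0)
      simp only [LinearMap.comp_apply, LinearMap.prodMap_apply, Prod.map_apply] at this
      simp [this, hξ]
      exact map_zero ρ
    obtain ⟨m, hm⟩ := hMV (by simpa [LinearMap.mem_ker] using h2)
    have hψm : ψ m = 0 := by
      apply hι
      have := congrFun (congrArg DFunLike.coe hsq₁) m
      simp only [LinearMap.comp_apply, LinearMap.prodMap_apply, Prod.map_apply] at this
      rw [map_zero, this, hm]
      simp [hξ, Prod.ext_iff]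
    obtain ⟨ξ', hξ'⟩ := hexact ▸ LinearMap.mem_ker.mpr hψm
    exact ⟨ξ', by rw [hξ', hm]⟩
  · rintro ⟨ξ', hξ'⟩
    have hψφ : ψ (φ ξ') = 0 := by
      have : φ ξ' ∈ LinearMap.ker ψ := hexact ▸ ⟨ξ', rfl⟩
      simpa using this
    have := congrFun (congrArg DFunLike.coe hsq₁) (φ ξ')
    simp only [LinearMap.comp_apply, LinearMap.prodMap_apply, Prod.map_apply] at this
    rw [hψφ, map_zero, hξ'] at this
    exact congrArg Prod.fst this.symm
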